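/- Let Π be a ground DLP program (a classical disjunctive logic program without aggregates) and let Π' be the corresponding DFLP₁^FA program obtained by annotating every head atom and every body atom of every rule of Π with the fuzzy annotation 1. Let I ⊆ B_L be a classical interpretation and define the fuzzy interpretation I' by I'(a) = 1 if a ∈ I and I'(b) = 0 if b ∈ B_L \ I. Then I' is a fuzzy answer set of Π' if and only if I is a classical answer set of Π in the sense of Gelfond and Lifschitz. -/

import Mathlib

open scoped Classical

noncomputable section

/-- Grade membership values: elements of the unit interval [0,1]. -/
abbrev Grade := unitInterval

/-- An element ⟨X:U | C⟩ of a ground fuzzy set: a real term X, a grade U,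
and a finite conjunction C of fuzzy annotated atoms. -/
structure FuzzyPair (Atom : Type) where
  term : ℝ
  grade : Grade
  conj : List (Atom × Grade)

/-- A ground fuzzy set: a set of pairs ⟨X:U | C⟩. -/
abbrev GroundFuzzySet (Atom : Type) := Finset (FuzzyPair Atom)

/-- Fuzzy aggregate function symbols. -/
inductive AggFun
  | sumF | timesF | minF | maxF | countF

/-- Comparison operators for aggregate atoms. -/
inductive CmpOp
  | eq | ne | lt | gt | le | ge

def CmpOp.apply : CmpOp → ℝ → ℝ → Prop
  | .eq, x, t => x = t
  | .ne, x, t => x ≠ t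
  | .lt, x, t => x < t
  | .gt, x, t => x > t
  | .le, x, t => x ≤ t
  | .ge, x, t => x ≥ t

/-- A conjunction of fuzzy annotated atoms is true w.r.t. I iff every a:μ in it has μ ≤ I(a). -/
def conjTrue {Atom : Type} (I : Atom → Grade) (C : List (Atom × Grade)) : Prop :=
  ∀ p ∈ C, p.2 ≤ I p.1

/-- S_I : the multiset {{ X:U | ⟨X:U | C⟩ ∈ S and C is true w.r.t. I }}. -/
def fuzzySetEval {Atom : Type} (I : Atom → Grade) (S : GroundFuzzySet Atom) :
    Multiset (ℝ × Grade) :=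
  (S.val.filter (fun p => conjTrue I p.conj)).map (fun p => (p.term, p.grade))

/-- Minimum of the grade (second) components of a multiset; 1 on the empty multiset. -/
def minGrade (M : Multiset (ℝ × Grade)) : Grade :=
  (M.map Prod.snd).fold min 1

/-- Evaluation of a fuzzy aggregate on a multiset; `none` represents ⊥ (undefined). -/
def aggEval : AggFun → Multiset (ℝ × Grade) → Option (ℝ × Grade)
  | .sumF, M => some ((M.map Prod.fst).sum, minGrade M)
  | .timesF, M => some ((M.map Prod.fst).prod, minGrade M)
  | .minF, M => if M = 0 then none else some (sInf {x | x ∈ M.map Prod.fst}, minGrade M)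
  | .maxF, M => if M = 0 then none else some (sSup {x | x ∈ M.map Prod.fst}, minGrade M)
  | .countF, M => some ((Multiset.card M : ℝ), minGrade M)

/-- A body element: an atom or a ground fuzzy aggregate atom f(S) ≺ T. -/
inductive BodyAtom (Atom : Type)
  | atom (a : Atom)
  | agg (f : AggFun) (S : GroundFuzzySet Atom) (op : CmpOp) (T : ℝ)

/-- A body literal: a possibly negated annotated body atom. -/
structure BodyLit (Atom : Type) where
  neg : Bool
  batom : BodyAtom Atom
  grade : Grade

/-- A ground DFLP^FA rule: annotated head disjuncts and a body of literals. -/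
structure Rule (Atom : Type) where
  head : List (Atom × Grade)
  body : List (BodyLit Atom)

/-- Satisfaction of an annotated (non-negated) body atom. -/
def satBodyAtom {Atom : Type} (I : Atom → Grade) : BodyAtom Atom → Grade → Prop
  | .atom a, μ => μ ≤ I a
  | .agg f S op T, μ =>
      ∃ x ν, aggEval f (fuzzySetEval I S) = some (x, ν) ∧ CmpOp.apply op x T ∧ μ ≤ ν

/-- Satisfaction of a body literal (negation is failure of satisfaction). -/
def satLit {Atom : Type} (I : Atom → Grade) (l : BodyLit Atom) : Prop :=
  if l.neg then ¬ satBodyAtom I l.batom l.grade else satBodyAtom I l.batom l.grade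

def satBody {Atom : Type} (I : Atom → Grade) (r : Rule Atom) : Prop :=
  ∀ l ∈ r.body, satLit I l

def satHead {Atom : Type} (I : Atom → Grade) (r : Rule Atom) : Prop :=
  ∃ h ∈ r.head, h.2 ≤ I h.1

def satRule {Atom : Type} (I : Atom → Grade) (r : Rule Atom) : Prop :=
  satBody I r → satHead I r

/-- I is a fuzzy model of Π: I satisfies every rule and, for every atom a,
max{{ μ | some rule r ∈ Π has I satisfying body(r) and a:μ a head disjunct satisfied by I }} ≤ I(a). -/
def isFuzzyModel {Atom : Type} (I : Atom → Grade) (P : Set (Rule Atom)) : Prop :=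
  (∀ r ∈ P, satRule I r) ∧
  ∀ a μ, (∃ r ∈ P, satBody I r ∧ (a, μ) ∈ r.head ∧ μ ≤ I a) → μ ≤ I a

/-- ≤-minimal fuzzy model: no fuzzy model I' with I' < I (pointwise I' ≤ I and I' ≠ I). -/
def isMinimalFuzzyModel {Atom : Type} (I : Atom → Grade) (P : Set (Rule Atom)) : Prop :=
  isFuzzyModel I P ∧ ¬ ∃ I' : Atom → Grade, isFuzzyModel I' P ∧ I' ≤ I ∧ I' ≠ I

/-- The fuzzy reduct Π^I = { r ∈ Π | I satisfies body(r) }. -/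
def fuzzyReduct {Atom : Type} (P : Set (Rule Atom)) (I : Atom → Grade) : Set (Rule Atom) :=
  {r ∈ P | satBody I r}

/-- I is a fuzzy answer set of Π iff I is a ≤-minimal fuzzy model of Π^I. -/
def isFuzzyAnswerSet {Atom : Type} (I : Atom → Grade) (P : Set (Rule Atom)) : Prop :=
  isMinimalFuzzyModel I (fuzzyReduct P I)

end

noncomputable section

/-- An element ⟨X | C⟩ of a classical ground aggregate set: a real term X and a
finite conjunction C of ground atoms. -/
structure CPair (Atom : Type) where
  term : ℝ
  conj : List Atom

/-- A classical ground aggregate set. -/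
abbrev CSet (Atom : Type) := Finset (CPair Atom)

/-- A classical body element: an atom or a ground classical aggregate atom f{S} ≺ T. -/
inductive CBodyAtom (Atom : Type)
  | atom (a : Atom)
  | agg (f : AggFun) (S : CSet Atom) (op : CmpOp) (T : ℝ)

/-- A classical body literal (possibly negated). -/
structure CLit (Atom : Type) where
  neg : Bool
  batom : CBodyAtom Atom

/-- A ground classical disjunctive rule. -/
structure CRule (Atom : Type) where
  head : List Atom
  body : List (CLit Atom)

/-- S_I : the multiset {{ X | ⟨X | C⟩ ∈ S and every atom of C is in I }}. -/
def cSetEval {Atom : Type} (I : Set Atom) (S : CSet Atom) : Multiset ℝ :=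
  (S.val.filter (fun p => ∀ a ∈ p.conj, a ∈ I)).map CPair.term

/-- Evaluation of a classical aggregate; `none` means undefined. -/
def cAggEval : AggFun → Multiset ℝ → Option ℝ
  | .sumF, M => some M.sum
  | .timesF, M => some M.prod
  | .minF, M => if M = 0 then none else some (sInf {x | x ∈ M})
  | .maxF, M => if M = 0 then none else some (sSup {x | x ∈ M})
  | .countF, M => some (Multiset.card M : ℝ)

def cSatBodyAtom {Atom : Type} (I : Set Atom) : CBodyAtom Atom → Prop
  | .atom a => a ∈ I
  | .agg f S op T => ∃ x, cAggEval f (cSetEval I S) = some x ∧ CmpOp.apply op x T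

def cSatLit {Atom : Type} (I : Set Atom) (l : CLit Atom) : Prop :=
  if l.neg then ¬ cSatBodyAtom I l.batom else cSatBodyAtom I l.batom

def cSatBody {Atom : Type} (I : Set Atom) (r : CRule Atom) : Prop :=
  ∀ l ∈ r.body, cSatLit I l

def cSatHead {Atom : Type} (I : Set Atom) (r : CRule Atom) : Prop :=
  ∃ a ∈ r.head, a ∈ I

def cSatRule {Atom : Type} (I : Set Atom) (r : CRule Atom) : Prop :=
  cSatBody I r → cSatHead I r

/-- I is a classical model of a program iff it satisfies all its rules. -/
def cModel {Atom : Type} (I : Set Atom) (P : Set (CRule Atom)) : Prop :=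
  ∀ r ∈ P, cSatRule I r

/-- The DLP^A reduct Π^I = { r ∈ Π | I satisfies body(r) }. -/
def cReduct {Atom : Type} (P : Set (CRule Atom)) (I : Set Atom) : Set (CRule Atom) :=
  {r ∈ P | cSatBody I r}

/-- I is a classical answer set of Π iff I is a ⊆-minimal classical model of Π^I. -/
def cAnswerSet {Atom : Type} (I : Set Atom) (P : Set (CRule Atom)) : Prop :=
  cModel I (cReduct P I) ∧ ¬ ∃ I' : Set Atom, cModel I' (cReduct P I) ∧ I' ⊂ I

/-- Translation: annotate a classical aggregate-set element with the fuzzy annotation 1. -/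
def trPair {Atom : Type} (p : CPair Atom) : FuzzyPair Atom :=
  ⟨p.term, 1, p.conj.map (fun a => (a, 1))⟩

def trSet {Atom : Type} (S : CSet Atom) : GroundFuzzySet Atom := S.image trPair

def trBodyAtom {Atom : Type} : CBodyAtom Atom → BodyAtom Atom
  | .atom a => .atom a
  | .agg f S op T => .agg f (trSet S) op T

def trLit {Atom : Type} (l : CLit Atom) : BodyLit Atom := ⟨l.neg, trBodyAtom l.batom, 1⟩

/-- Translation of a classical rule: annotate every head and body element with 1. -/
def trRule {Atom : Type} (r : CRule Atom) : Rule Atom :=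
  ⟨r.head.map (fun a => (a, 1)), r.body.map trLit⟩

/-- The DFLP₁^FA program corresponding to a classical program. -/
def trProg {Atom : Type} (P : Set (CRule Atom)) : Set (Rule Atom) := trRule '' P

end

noncomputable section

/-- Delete all negative literals from a classical rule. -/
def dropNegCLits {Atom : Type} (r : CRule Atom) : CRule Atom :=
  ⟨r.head, r.body.filter (fun l => !l.neg)⟩

/-- The Gelfond–Lifschitz reduct of a (aggregate-free) classical program Π w.r.t. I:
delete every rule containing a negative literal not a_j with a_j ∈ I, and delete all
negative literals from the remaining rules. -/
def glReduct {Atom : Type} (P : Set (CRule Atom)) (I : Set Atom) : Set (CRule Atom) :=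
  dropNegCLits ''
    {r ∈ P | ∀ l ∈ r.body, l.neg = true →
      ∀ a : Atom, l.batom = CBodyAtom.atom a → a ∉ I}

/-- I is a classical answer set in the sense of Gelfond and Lifschitz:
a ⊆-minimal classical model of the Gelfond–Lifschitz reduct. -/
def glAnswerSet {Atom : Type} (I : Set Atom) (P : Set (CRule Atom)) : Prop :=
  cModel I (glReduct P I) ∧ ¬ ∃ I' : Set Atom, cModel I' (glReduct P I) ∧ I' ⊂ I

end

section AuxAS4

variable {Atom : Type}

lemma AS4.one_le_iff {x : Grade} : (1:Grade) ≤ x ↔ x = 1 :=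
  ⟨fun h => le_antisymm unitInterval.le_one' h, fun h => h.ge⟩

lemma AS4.not_one_le_zero : ¬ ((1:Grade) ≤ 0) := by
  intro h
  have : (1:ℝ) ≤ 0 := h
  norm_num at this

lemma AS4.satLit_tr (J : Atom → Grade) (K : Set Atom)
    (hK : ∀ b, b ∈ K ↔ (1:Grade) ≤ J b)
    (l : CLit Atom) (a : Atom) (ha : l.batom = CBodyAtom.atom a) :
    satLit J (trLit l) ↔ cSatLit K l := by
  unfold satLit cSatLit trLit
  simp only [ha, trBodyAtom]
  cases l.neg <;> simp [satBodyAtom, cSatBodyAtom, hK a]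

lemma AS4.satBody_tr (J : Atom → Grade) (K : Set Atom)
    (hK : ∀ b, b ∈ K ↔ (1:Grade) ≤ J b) (r : CRule Atom)
    (hr : ∀ l ∈ r.body, ∃ a, l.batom = CBodyAtom.atom a) :
    satBody J (trRule r) ↔ cSatBody K r := by
  unfold satBody cSatBody trRule
  simp only [List.mem_map]
  constructor
  · intro h l hl
    obtain ⟨a, ha⟩ := hr l hl
    exact (AS4.satLit_tr J K hK l a ha).1 (h _ ⟨l, hl, rfl⟩)
  · rintro h _ ⟨l, hl, rfl⟩
    obtain ⟨a, ha⟩ := hr l hl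
    exact (AS4.satLit_tr J K hK l a ha).2 (h l hl)

lemma AS4.satHead_tr (J : Atom → Grade) (K : Set Atom)
    (hK : ∀ b, b ∈ K ↔ (1:Grade) ≤ J b) (r : CRule Atom) :
    satHead J (trRule r) ↔ cSatHead K r := by
  unfold satHead cSatHead trRule
  simp only [List.mem_map]
  constructor
  · rintro ⟨h, ⟨a, ha, rfl⟩, hle⟩
    exact ⟨a, ha, (hK a).2 hle⟩
  · rintro ⟨a, ha, haK⟩
    exact ⟨(a,1), ⟨a, ha, rfl⟩, (hK a).1 haK⟩

lemma AS4.fuzzyModel_tr (J : Atom → Grade) (K : Set Atom)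
    (hK : ∀ b, b ∈ K ↔ (1:Grade) ≤ J b) (Q : Set (CRule Atom))
    (hQ : ∀ r ∈ Q, ∀ l ∈ r.body, ∃ a, l.batom = CBodyAtom.atom a) :
    isFuzzyModel J (trRule '' Q) ↔ cModel K Q := by
  constructor
  · rintro ⟨h1, -⟩ r hr hb
    exact (AS4.satHead_tr J K hK r).1
      (h1 _ ⟨r, hr, rfl⟩ ((AS4.satBody_tr J K hK r (hQ r hr)).2 hb))
  · intro h
    refine ⟨?_, fun a μ ⟨_, _, _, _, h'⟩ => h'⟩
    rintro _ ⟨r, hr, rfl⟩ hb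
    exact (AS4.satHead_tr J K hK r).2
      (h r hr ((AS4.satBody_tr J K hK r (hQ r hr)).1 hb))

lemma AS4.reduct_eq (P : Set (CRule Atom)) (I : Set Atom) (I' : Atom → Grade)
    (hI : ∀ b, b ∈ I ↔ (1:Grade) ≤ I' b)
    (hnoagg : ∀ r ∈ P, ∀ l ∈ r.body, ∃ a, l.batom = CBodyAtom.atom a) :
    fuzzyReduct (trProg P) I' = trRule '' {r ∈ P | cSatBody I r} := by
  ext x
  simp only [fuzzyReduct, trProg, Set.mem_setOf_eq, Set.mem_image, Set.mem_sep_iff]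
  constructor
  · rintro ⟨⟨r, hr, rfl⟩, hb⟩
    exact ⟨r, ⟨hr, (AS4.satBody_tr I' I hI r (hnoagg r hr)).1 hb⟩, rfl⟩
  · rintro ⟨r, ⟨hr, hb⟩, rfl⟩
    exact ⟨⟨r, hr, rfl⟩, (AS4.satBody_tr I' I hI r (hnoagg r hr)).2 hb⟩

/-- If K models the GL reduct then K models {r ∈ P | cSatBody I r}. -/
lemma AS4.model_of_gl (P : Set (CRule Atom)) (I K : Set Atom)
    (hnoagg : ∀ r ∈ P, ∀ l ∈ r.body, ∃ a, l.batom = CBodyAtom.atom a)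
    (h : cModel K (glReduct P I)) :
    cModel K {r ∈ P | cSatBody I r} := by
  rintro r ⟨hr, hbI⟩ hbK
  have hneg : ∀ l ∈ r.body, l.neg = true →
      ∀ a : Atom, l.batom = CBodyAtom.atom a → a ∉ I := by
    intro l hl hn a ha haI
    have := hbI l hl
    rw [cSatLit, hn, if_pos rfl, ha] at this
    exact this haI
  have hmem : dropNegCLits r ∈ glReduct P I := ⟨r, ⟨hr, hneg⟩, rfl⟩
  have hbody : cSatBody K (dropNegCLits r) := by
    intro l hl
    rw [dropNegCLits] at hl
    exact hbK l (List.mem_of_mem_filter hl)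
  exact h (dropNegCLits r) hmem hbody

/-- If K ⊆ I and K models {r ∈ P | cSatBody I r} then K models the GL reduct. -/
lemma AS4.model_to_gl (P : Set (CRule Atom)) (I K : Set Atom) (hKI : K ⊆ I)
    (hnoagg : ∀ r ∈ P, ∀ l ∈ r.body, ∃ a, l.batom = CBodyAtom.atom a)
    (h : cModel K {r ∈ P | cSatBody I r}) :
    cModel K (glReduct P I) := by
  rintro _ ⟨r, ⟨hr, hneg⟩, rfl⟩ hbK
  have hbK' : cSatBody K r := by
    intro l hl
    obtain ⟨a, ha⟩ := hnoagg r hr l hl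
    rw [cSatLit, ha]
    cases hn : l.neg with
    | true =>
      simp only [if_pos rfl]
      intro haK
      exact hneg l hl hn a ha (hKI haK)
    | false =>
      rw [if_neg Bool.false_ne_true]
      have : l ∈ (dropNegCLits r).body := by
        rw [dropNegCLits]
        exact List.mem_filter.2 ⟨hl, by simp [hn]⟩
      have := hbK l this
      rwa [cSatLit, hn, if_neg Bool.false_ne_true, ha] at this
  have hbI : cSatBody I r := by
    intro l hl
    obtain ⟨a, ha⟩ := hnoagg r hr l hl
    rw [cSatLit, ha]
    cases hn : l.neg with
    | true =>
      simp only [if_pos rfl]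
      exact hneg l hl hn a ha
    | false =>
      rw [if_neg Bool.false_ne_true]
      have := hbK' l hl
      rw [cSatLit, hn, if_neg Bool.false_ne_true, ha] at this
      exact hKI this
  exact h r ⟨hr, hbI⟩ hbK'

end AuxAS4

/-- Let Π be a ground DLP program (no aggregates) and Π' its DFLP₁^FA
translation (every atom annotated with 1). Let I ⊆ B_L be a classical interpretation and I'
the fuzzy interpretation with I'(a) = 1 if a ∈ I and I'(a) = 0 otherwise. Then I' is a fuzzy
answer set of Π' iff I is a classical answer set of Π in the Gelfond–Lifschitz sense. -/
theorem fuzzy_answer_set_iff_classical_answer_set_DLP {Atom : Type}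
    (P : Set (CRule Atom))
    (hnoagg : ∀ r ∈ P, ∀ l ∈ r.body, ∃ a : Atom, l.batom = CBodyAtom.atom a)
    (I : Set Atom) (I' : Atom → Grade)
    (hI' : ∀ a, I' a = if a ∈ I then 1 else 0) :
    isFuzzyAnswerSet I' (trProg P) ↔ glAnswerSet I P := by
  classical
  have hI : ∀ b, b ∈ I ↔ (1:Grade) ≤ I' b := by
    intro b
    rw [hI' b]
    by_cases hb : b ∈ I
    · simp [hb]
    · simp [hb, AS4.not_one_le_zero]
  have hredeq := AS4.reduct_eq P I I' hI hnoagg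
  have hQagg : ∀ r ∈ {r ∈ P | cSatBody I r}, ∀ l ∈ r.body,
      ∃ a, l.batom = CBodyAtom.atom a := fun r hr => hnoagg r hr.1
  constructor
  · rintro ⟨hmod, hmin⟩
    rw [hredeq] at hmod hmin
    have hImod : cModel I {r ∈ P | cSatBody I r} :=
      (AS4.fuzzyModel_tr I' I hI _ hQagg).1 hmod
    refine ⟨AS4.model_to_gl P I I (le_refl I) hnoagg hImod, ?_⟩
    rintro ⟨K, hKmod, hKI⟩
    have hKmod' : cModel K {r ∈ P | cSatBody I r} :=
      AS4.model_of_gl P I K hnoagg hKmod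
    set J : Atom → Grade := fun a => if a ∈ K then 1 else 0 with hJ
    have hKJ : ∀ b, b ∈ K ↔ (1:Grade) ≤ J b := by
      intro b
      by_cases hb : b ∈ K
      · simp [hJ, hb]
      · simp [hJ, hb, AS4.not_one_le_zero]
    have hJmod : isFuzzyModel J (trRule '' {r ∈ P | cSatBody I r}) :=
      (AS4.fuzzyModel_tr J K hKJ _ hQagg).2 hKmod'
    obtain ⟨a, haI, haK⟩ := Set.exists_of_ssubset hKI
    refine hmin ⟨J, hJmod, ?_, ?_⟩
    · intro b
      rw [hI' b]
      simp only [hJ]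
      by_cases hb : b ∈ K
      · simp [hb, hKI.1 hb]
      · simp [hb, unitInterval.nonneg']
    · intro heq
      have h1 : J a = I' a := congrFun heq a
      rw [hI' a, if_pos haI] at h1
      simp only [hJ, if_neg haK] at h1
      exact AS4.not_one_le_zero h1.ge
  · rintro ⟨hmod, hmin⟩
    have hImod : cModel I {r ∈ P | cSatBody I r} :=
      AS4.model_of_gl P I I hnoagg hmod
    rw [isFuzzyAnswerSet, isMinimalFuzzyModel, hredeq]
    refine ⟨(AS4.fuzzyModel_tr I' I hI _ hQagg).2 hImod, ?_⟩
    rintro ⟨J, hJmod, hJle, hJne⟩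
    set K : Set Atom := {b | (1:Grade) ≤ J b} with hK
    have hKJ : ∀ b, b ∈ K ↔ (1:Grade) ≤ J b := fun b => Iff.rfl
    have hKI : K ⊆ I := by
      intro b hb
      by_contra hbI
      have h0 : I' b = 0 := by rw [hI' b, if_neg hbI]
      exact AS4.not_one_le_zero (le_trans hb (h0 ▸ hJle b))
    have hKmod : cModel K {r ∈ P | cSatBody I r} :=
      (AS4.fuzzyModel_tr J K hKJ _ hQagg).1 hJmod
    have hne : K ≠ I := by
      intro heq
      apply hJne
      funext b
      rw [hI' b]
      by_cases hb : b ∈ I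
      · have hbK : b ∈ K := heq ▸ hb
        rw [if_pos hb]
        exact le_antisymm unitInterval.le_one' hbK
      · have hb' : b ∉ K := fun h => hb (heq ▸ h)
        rw [if_neg hb]
        have h0 : I' b = 0 := by rw [hI' b, if_neg hb]
        exact le_antisymm (h0 ▸ hJle b) unitInterval.nonneg'
    exact hmin ⟨K, AS4.model_to_gl P I K hKI hnoagg hKmod,
      ⟨hKI, fun h => hne (le_antisymm hKI h)⟩⟩
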